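/- Let H₀ : D → 𝓗 be a symmetric linear operator that is bounded below (there is c ∈ ℝ with ⟨H₀ψ,ψ⟩ ≥ c‖ψ‖² for all ψ ∈ D), and let H₁ : D → 𝓗 be a symmetric linear operator such that for some constants 0 ≤ a < 1 and b ≥ 0 one has |⟨H₁ψ,ψ⟩| ≤ a·⟨H₀ψ,ψ⟩ + b·‖ψ‖² for all ψ ∈ D. If μₙ(H₀) → ∞ as n → ∞ (i.e. H₀ has only discrete spectrum), then μₙ(H₀ + H₁) → ∞ as n → ∞ (i.e. H₀ + H₁ has only discrete spectrum). -/

import Mathlib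

/-- `U_H(φ₁,…,φ_m) = inf{⟨Hψ,ψ⟩ : ψ ∈ D, ‖ψ‖ = 1, ψ ⊥ φⱼ for all j}`. -/
noncomputable def minMaxU {E : Type*} [NormedAddCommGroup E] [InnerProductSpace ℂ E]
    {D : Submodule ℂ E} (H : D →ₗ[ℂ] E) {m : ℕ} (φ : Fin m → E) : ℝ :=
  sInf {r : ℝ | ∃ ψ : D, ‖(ψ : E)‖ = 1 ∧ (∀ j, (inner ℂ (ψ : E) (φ j) : ℂ) = 0) ∧
    r = (inner ℂ (H ψ) (ψ : E) : ℂ).re}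

/-- The min–max values `μₙ(H) = sup_{φ₁,…,φ_{n−1}} U_H(φ₁,…,φ_{n−1})`. -/
noncomputable def minMaxMu {E : Type*} [NormedAddCommGroup E] [InnerProductSpace ℂ E]
    {D : Submodule ℂ E} (H : D →ₗ[ℂ] E) (n : ℕ) : ℝ :=
  sSup {s : ℝ | ∃ φ : Fin (n - 1) → E, s = minMaxU H φ}

/-- **Compact perturbation preserves discreteness of spectrum.**
If `H₀` is symmetric and bounded below with `μₙ(H₀) → ∞` (purely discrete spectrum),
and `H₁` is symmetric with `|⟨H₁ψ,ψ⟩| ≤ a⟨H₀ψ,ψ⟩ + b‖ψ‖²` for some `0 ≤ a < 1`,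
`b ≥ 0`, then `μₙ(H₀ + H₁) → ∞`, i.e. `H₀ + H₁ has only discrete spectrum`. -/
theorem discrete_spectrum_of_relatively_bounded_perturbation
    {E : Type*} [NormedAddCommGroup E] [InnerProductSpace ℂ E] [CompleteSpace E]
    (D : Submodule ℂ E) (hD : Dense (D : Set E))
    (H0 H1 : D →ₗ[ℂ] E)
    (hsym0 : ∀ ψ φ : D, (inner ℂ (H0 ψ) (φ : E) : ℂ) = inner ℂ (ψ : E) (H0 φ))
    (hsym1 : ∀ ψ φ : D, (inner ℂ (H1 ψ) (φ : E) : ℂ) = inner ℂ (ψ : E) (H1 φ))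
    (hbdd : ∃ c : ℝ, ∀ ψ : D, c * ‖(ψ : E)‖ ^ 2 ≤ (inner ℂ (H0 ψ) (ψ : E) : ℂ).re)
    (a b : ℝ) (ha0 : 0 ≤ a) (ha1 : a < 1) (hb : 0 ≤ b)
    (hrel : ∀ ψ : D, ‖(inner ℂ (H1 ψ) (ψ : E) : ℂ)‖ ≤
      a * (inner ℂ (H0 ψ) (ψ : E) : ℂ).re + b * ‖(ψ : E)‖ ^ 2)
    (hdisc : Filter.Tendsto (fun n => minMaxMu H0 n) Filter.atTop Filter.atTop) :
    Filter.Tendsto (fun n => minMaxMu (H0 + H1) n) Filter.atTop Filter.atTop := by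
  have ha1' : (0:ℝ) < 1 - a := by linarith
  obtain ⟨c, hc⟩ := hbdd
  -- pointwise estimates for unit vectors
  have hpt : ∀ ψ : D, ‖(ψ:E)‖ = 1 →
      (1-a) * (inner ℂ (H0 ψ) (ψ:E) : ℂ).re - b ≤ (inner ℂ ((H0+H1) ψ) (ψ:E) : ℂ).re ∧
      (inner ℂ ((H0+H1) ψ) (ψ:E) : ℂ).re ≤ (1+a) * (inner ℂ (H0 ψ) (ψ:E) : ℂ).re + b := by
    intro ψ hψ
    have h2 : (inner ℂ ((H0+H1) ψ) (ψ:E) : ℂ).re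
        = (inner ℂ (H0 ψ) (ψ:E) : ℂ).re + (inner ℂ (H1 ψ) (ψ:E) : ℂ).re := by
      have h1 : ((H0+H1) ψ : E) = (H0 ψ : E) + H1 ψ := rfl
      rw [h1, inner_add_left, Complex.add_re]
    have h3 := hrel ψ
    rw [hψ] at h3
    have h4 : |(inner ℂ (H1 ψ) (ψ:E) : ℂ).re| ≤ ‖(inner ℂ (H1 ψ) (ψ:E) : ℂ)‖ :=
      Complex.abs_re_le_norm _
    rw [abs_le] at h4
    constructor <;> simp only [h2] <;> nlinarith [h4.1, h4.2]
  -- bound on U level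
  have keyU : ∀ {m : ℕ} (φ : Fin m → E),
      (1-a) * minMaxU H0 φ - b ≤ minMaxU (H0+H1) φ ∧
      minMaxU (H0+H1) φ ≤ (1+a) * minMaxU H0 φ + b := by
    intro m φ
    by_cases hne : ∃ ψ : D, ‖(ψ:E)‖ = 1 ∧ ∀ j, (inner ℂ (ψ:E) (φ j) : ℂ) = 0
    · obtain ⟨ψ₀, hψ₀u, hψ₀o⟩ := hne
      set S0 : Set ℝ := {r : ℝ | ∃ ψ : D, ‖(ψ : E)‖ = 1 ∧
          (∀ j, (inner ℂ (ψ : E) (φ j) : ℂ) = 0) ∧ r = (inner ℂ (H0 ψ) (ψ : E) : ℂ).re} with hS0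
      set S : Set ℝ := {r : ℝ | ∃ ψ : D, ‖(ψ : E)‖ = 1 ∧
          (∀ j, (inner ℂ (ψ : E) (φ j) : ℂ) = 0) ∧ r = (inner ℂ ((H0+H1) ψ) (ψ : E) : ℂ).re} with hS
      have hU0 : minMaxU H0 φ = sInf S0 := rfl
      have hU : minMaxU (H0+H1) φ = sInf S := rfl
      have hS0ne : S0.Nonempty := ⟨_, ψ₀, hψ₀u, hψ₀o, rfl⟩
      have hSne : S.Nonempty := ⟨_, ψ₀, hψ₀u, hψ₀o, rfl⟩
      have hS0bdd : BddBelow S0 := by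
        refine ⟨c, fun r hr => ?_⟩
        obtain ⟨ψ, hu, -, hr⟩ := hr
        have := hc ψ
        rw [hu] at this
        simpa [hr] using this
      have hS0inf : ∀ r ∈ S0, sInf S0 ≤ r := fun r hr => csInf_le hS0bdd hr
      have hSbdd : BddBelow S := by
        refine ⟨(1-a)*c - b, fun r hr => ?_⟩
        obtain ⟨ψ, hu, -, hr⟩ := hr
        have h1 := (hpt ψ hu).1
        have h2 := hc ψ
        rw [hu] at h2
        simp only [one_pow, mul_one] at h2
        nlinarith
      rw [hU0, hU]
      constructor
      · refine le_csInf hSne fun r hr => ?_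
        obtain ⟨ψ, hu, ho, hr⟩ := hr
        have h1 := (hpt ψ hu).1
        have h2 : sInf S0 ≤ (inner ℂ (H0 ψ) (ψ:E) : ℂ).re :=
          hS0inf _ ⟨ψ, hu, ho, rfl⟩
        nlinarith
      · have h5 : (sInf S - b) / (1+a) ≤ sInf S0 := by
          refine le_csInf hS0ne fun r0 hr0 => ?_
          obtain ⟨ψ, hu, ho, hr0⟩ := hr0
          have hrS : (inner ℂ ((H0+H1) ψ) (ψ:E) : ℂ).re ∈ S := ⟨ψ, hu, ho, rfl⟩
          have h6 : sInf S ≤ (inner ℂ ((H0+H1) ψ) (ψ:E) : ℂ).re := csInf_le hSbdd hrS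
          have h7 := (hpt ψ hu).2
          rw [div_le_iff₀ (by linarith : (0:ℝ) < 1+a)]
          nlinarith
        rw [div_le_iff₀ (by linarith : (0:ℝ) < 1+a)] at h5
        nlinarith
    · have hempty : ∀ (H : D →ₗ[ℂ] E), minMaxU H φ = 0 := by
        intro H
        have : {r : ℝ | ∃ ψ : D, ‖(ψ : E)‖ = 1 ∧
            (∀ j, (inner ℂ (ψ : E) (φ j) : ℂ) = 0) ∧ r = (inner ℂ (H ψ) (ψ : E) : ℂ).re} = ∅ := by
          ext r
          simp only [Set.mem_setOf_eq, Set.mem_empty_iff_false, iff_false]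
          rintro ⟨ψ, hu, ho, -⟩
          exact hne ⟨ψ, hu, ho⟩
        rw [minMaxU, this, Real.sInf_empty]
      rw [hempty, hempty]
      constructor <;> nlinarith
  -- top level
  rw [Filter.tendsto_atTop]
  intro K
  have hev := hdisc.eventually_ge_atTop (max 1 ((K + b)/(1-a)))
  filter_upwards [hev] with n hn
  set T0 : Set ℝ := {s : ℝ | ∃ φ : Fin (n - 1) → E, s = minMaxU H0 φ} with hT0
  set T : Set ℝ := {s : ℝ | ∃ φ : Fin (n - 1) → E, s = minMaxU (H0+H1) φ} with hT
  have hM0 : minMaxMu H0 n = sSup T0 := rfl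
  have hM : minMaxMu (H0+H1) n = sSup T := rfl
  have hT0ne : T0.Nonempty := ⟨_, fun _ => 0, rfl⟩
  have hTne : T.Nonempty := ⟨_, fun _ => 0, rfl⟩
  have hM1 : 1 ≤ minMaxMu H0 n := le_trans (le_max_left _ _) hn
  have hT0bdd : BddAbove T0 := by
    by_contra h
    have : sSup T0 = 0 := Real.sSup_of_not_bddAbove h
    rw [hM0, this] at hM1
    linarith
  have hT0sup : ∀ s ∈ T0, s ≤ sSup T0 := fun s hs => le_csSup hT0bdd hs
  have hTbdd : BddAbove T := by
    refine ⟨(1+a) * sSup T0 + b, fun s hs => ?_⟩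
    obtain ⟨φ, hφ⟩ := hs
    have h1 := (keyU φ).2
    have h2 : minMaxU H0 φ ≤ sSup T0 := hT0sup _ ⟨φ, rfl⟩
    nlinarith
  have hkey : (1-a) * sSup T0 - b ≤ sSup T := by
    have h6 : sSup T0 ≤ (sSup T + b)/(1-a) := by
      refine csSup_le hT0ne fun s0 hs0 => ?_
      obtain ⟨φ, hφ⟩ := hs0
      have h7 := (keyU φ).1
      have h8 : minMaxU (H0+H1) φ ≤ sSup T := le_csSup hTbdd ⟨φ, rfl⟩
      rw [le_div_iff₀ ha1']
      nlinarith
    rw [le_div_iff₀ ha1'] at h6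
    nlinarith
  have hK : (K+b)/(1-a) ≤ minMaxMu H0 n := le_trans (le_max_right _ _) hn
  rw [div_le_iff₀ ha1'] at hK
  rw [hM0] at hK
  rw [hM]
  nlinarith
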